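/- Let A* be a p-torsion free log Dieudonné algebra with log structure α : L → A^0, log derivation δ : L → A¹ and Frobenius F_L on L. Then η_p(A*) carries a canonical log Dieudonné algebra structure with log structure η_p(α) = α ∘ F_L and log derivation η_p(δ) = δ ∘ F_L; in particular α ∘ F_L lands in (η_p A)^0 and δ ∘ F_L lands in (η_p A)¹, using the relations dF = pFd and δ ∘ F_L = pFδ. -/
import Mathlib


/-- Let `A*` be a `p`-torsion free log Dieudonné algebra with log
structure `α : L → A⁰`, log derivation `δ : L → A¹` and Frobenius `F_L` on `L`.
Then `η_p(A*)` carries a canonical log Dieudonné algebra structure with log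
structure `η_p(α) = α ∘ F_L` and log derivation `η_p(δ) = δ ∘ F_L`.  In
particular: `α(F_L m) ∈ (η_p A)⁰` (i.e. `d(α(F_L m)) ∈ p A¹`),
`δ(F_L m) ∈ (η_p A)¹ = p A¹ ∩ d⁻¹(p² A²)`, and the pair `(α ∘ F_L, δ ∘ F_L)`
is again a log derivation. -/
theorem statement16
    (p : ℕ) (hp : p.Prime)
    (A : ℕ → Type) [∀ n, AddCommGroup (A n)]
    (d : ∀ n, A n →+ A (n + 1))
    (hdd : ∀ n (x : A n), d (n + 1) (d n x) = 0)
    (F : ∀ n, A n →+ A n)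
    (hdF : ∀ n (x : A n), d n (F n x) = (p : ℤ) • F (n + 1) (d n x))
    (htf : ∀ n (x : A n), (p : ℤ) • x = 0 → x = 0)
    (mul : ∀ i j, A i →+ A j →+ A (i + j))
    (hFmul : ∀ i j (x : A i) (y : A j),
      F (i + j) (mul i j x y) = mul i j (F i x) (F j y))
    -- the log structure, log derivation and log Frobenius
    (L : Type) [CommMonoid L]
    (α : L → A 0) (δ : L → A 1) (FL : L → L)
    (hαδ : ∀ m, mul 0 1 (α m) (δ m) = d 0 (α m))
    (hdδ : ∀ m, d 1 (δ m) = 0)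
    (hFα : ∀ m, F 0 (α m) = α (FL m))
    (hδF : ∀ m, δ (FL m) = (p : ℤ) • F 1 (δ m)) :
    -- `α (F_L m)` lies in `(η_p A)⁰`
    (∀ m, ∃ z, d 0 (α (FL m)) = (p : ℤ) • z) ∧
    -- `δ (F_L m)` lies in `(η_p A)¹`
    (∀ m, ∃ z, δ (FL m) = (p : ℤ) • z) ∧
    (∀ m, ∃ w, d 1 (δ (FL m)) = (p : ℤ) ^ 2 • w) ∧
    -- `(α ∘ F_L, δ ∘ F_L)` is again a log derivation, with `d ∘ (δ ∘ F_L) = 0`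
    (∀ m, mul 0 1 (α (FL m)) (δ (FL m)) = d 0 (α (FL m))) ∧
    (∀ m, d 1 (δ (FL m)) = 0) := by
  have key5 : ∀ m, d 1 (δ (FL m)) = 0 := by
    intro m
    rw [hδF, map_zsmul, hdF, hdδ, map_zero, smul_zero, smul_zero]
  refine ⟨?_, ?_, ?_, ?_, key5⟩
  · intro m
    refine ⟨F 1 (d 0 (α m)), ?_⟩
    rw [← hFα, hdF]
  · intro m
    exact ⟨F 1 (δ m), hδF m⟩
  · intro m
    exact ⟨0, by rw [key5, smul_zero]⟩
  · intro m
    rw [← hFα, hδF]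
    rw [map_zsmul, ← hFmul, hαδ, ← hdF, hFα]
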